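/- The set L^σ_Levi(c, c₀) of σ-Levi operators from c to c₀ is not closed in the operator norm: there exists a sequence of finite-rank (hence σ-Levi) operators S_i converging in operator norm to an operator S that is not σ-Levi. -/

import Mathlib

open Filter

/-- membership in `c`, the space of convergent real sequences. -/
def InC (f : ℕ → ℝ) : Prop := ∃ l : ℝ, Filter.Tendsto f Filter.atTop (nhds l)

/-- membership in `c₀`, the space of null real sequences. -/
def InC0 (f : ℕ → ℝ) : Prop := Filter.Tendsto f Filter.atTop (nhds 0)

/-- `p ↓ 0` within the sublattice `c₀` of `ℕ → ℝ` (pointwise order). -/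
def DownToZeroInC0 (p : ℕ → ℕ → ℝ) : Prop :=
  (∀ n, InC0 (p n)) ∧ Antitone p ∧ (∀ n, 0 ≤ p n) ∧
    ∀ q : ℕ → ℝ, InC0 q → (∀ n, q ≤ p n) → q ≤ 0

/-- order convergence in `c₀`. -/
def OrderConvInC0 (x : ℕ → ℕ → ℝ) (l : ℕ → ℝ) : Prop :=
  InC0 l ∧ ∃ p : ℕ → ℕ → ℝ, DownToZeroInC0 p ∧ ∀ n, |x n - l| ≤ p n

/-- `S : c → c₀` is a σ-Levi operator. -/
def SigmaLeviCtoC0 (S : (ℕ → ℝ) → (ℕ → ℝ)) : Prop :=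
  ∀ x : ℕ → ℕ → ℝ, (∀ n, InC (x n)) → Monotone x → (∀ n, 0 ≤ x n) →
    (∃ M : ℝ, ∀ n k, x n k ≤ M) →
    ∃ z : ℕ → ℝ, InC z ∧ OrderConvInC0 (fun n => S (x n)) (S z)

lemma inC0_of_ev (f : ℕ → ℝ) (N : ℕ) (h : ∀ k, N ≤ k → f k = 0) : InC0 f := by
  have hev : f =ᶠ[atTop] (fun _ => (0:ℝ)) := Filter.eventually_atTop.2 ⟨N, h⟩
  have h0 : Tendsto (fun _ : ℕ => (0:ℝ)) atTop (nhds 0) := tendsto_const_nhds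
  exact h0.congr' hev.symm

lemma downToZero_pointwise {p : ℕ → ℕ → ℝ} (h : DownToZeroInC0 p) (k : ℕ) :
    Tendsto (fun n => p n k) atTop (nhds 0) := by
  obtain ⟨h0, hant, hpos, hinf⟩ := h
  have hbdd : BddBelow (Set.range fun n => p n k) :=
    ⟨0, by rintro x ⟨n, rfl⟩; exact hpos n k⟩
  have hmono : Antitone fun n => p n k := fun a b hab => hant hab k
  have htend : Tendsto (fun n => p n k) atTop (nhds (⨅ n, p n k)) :=
    tendsto_atTop_ciInf hmono hbdd
  set c := ⨅ n, p n k with hc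
  have hc0 : 0 ≤ c := le_ciInf fun n => hpos n k
  set q : ℕ → ℝ := fun j => if j = k then c else 0 with hq
  have hq0 : InC0 q := by
    refine inC0_of_ev q (k+1) ?_
    intro j hj
    have : j ≠ k := by omega
    simp [hq, this]
  have hqle : ∀ n, q ≤ p n := by
    intro n j
    by_cases hjk : j = k
    · subst hjk; simpa [hq] using ciInf_le hbdd n
    · simp [hq, hjk]; exact hpos n j
  have hle := hinf q hq0 hqle k
  simp [hq] at hle
  have : c = 0 := le_antisymm hle hc0
  rw [this] at htend; exact htend

theorem sigma_Levi_not_norm_closed :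
    ∃ (S : (ℕ → ℝ) → (ℕ → ℝ)) (Si : ℕ → (ℕ → ℝ) → (ℕ → ℝ)) (α : ℕ → ℝ),
      (∀ n, 0 < α n) ∧ Filter.Tendsto α Filter.atTop (nhds 0) ∧
      (∀ f k, S f k = α k * f k) ∧
      (∀ i f k, Si i f k = if k < i then α k * f k else 0) ∧
      -- each `Si` is finite rank (supported on finitely many coordinates)
      (∀ i f k, i ≤ k → Si i f k = 0) ∧
      -- each `Si` maps `c` into `c₀`, and so does `S`
      (∀ i f, InC f → InC0 (Si i f)) ∧ (∀ f, InC f → InC0 (S f)) ∧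
      -- each `Si` is σ-Levi
      (∀ i, SigmaLeviCtoC0 (Si i)) ∧
      -- `Si → S` in the operator norm
      (∃ ε : ℕ → ℝ, Filter.Tendsto ε Filter.atTop (nhds 0) ∧
        ∀ i (f : ℕ → ℝ), InC f → (∀ k, |f k| ≤ 1) → ∀ k, |Si i f k - S f k| ≤ ε i) ∧
      -- but `S` is not σ-Levi
      ¬ SigmaLeviCtoC0 S := by
  set α : ℕ → ℝ := fun n => ((n : ℝ) + 1)⁻¹ with hα
  have hαpos : ∀ n, 0 < α n := fun n => by positivity
  have hα0 : Tendsto α atTop (nhds 0) := by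
    simpa [hα, one_div] using tendsto_one_div_add_atTop_nhds_zero_nat (𝕜 := ℝ)
  have hαanti : ∀ i k : ℕ, i ≤ k → α k ≤ α i := by
    intro i k hik
    apply inv_anti₀ (by positivity)
    exact_mod_cast by omega
  refine ⟨fun f k => α k * f k, fun i f k => if k < i then α k * f k else 0, α,
    hαpos, hα0, fun f k => rfl, fun i f k => rfl, ?_, ?_, ?_, ?_, ?_, ?_⟩
  · intro i f k hik; simp [Nat.not_lt.2 hik]
  · -- Si maps c into c₀
    intro i f _
    exact inC0_of_ev _ i (fun k hk => by simp [Nat.not_lt.2 hk])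
  · -- S maps c into c₀
    rintro f ⟨l, hl⟩
    simpa [InC0] using hα0.mul hl
  · -- each Si is σ-Levi
    intro i x hc hmono hpos ⟨M, hM⟩
    have hbdd : ∀ k, BddAbove (Set.range fun n => x n k) := fun k =>
      ⟨M, by rintro y ⟨n, rfl⟩; exact hM n k⟩
    set L : ℕ → ℝ := fun k => ⨆ n, x n k with hL
    have hten : ∀ k, Tendsto (fun n => x n k) atTop (nhds (L k)) := fun k =>
      tendsto_atTop_ciSup (fun a b hab => hmono hab k) (hbdd k)
    have hxle : ∀ n k, x n k ≤ L k := fun n k => le_ciSup (hbdd k) n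
    set z : ℕ → ℝ := fun k => if k < i then L k else 0 with hz
    refine ⟨z, ⟨0, inC0_of_ev z i (fun k hk => by simp [hz, Nat.not_lt.2 hk])⟩,
      inC0_of_ev _ i (fun k hk => by simp [Nat.not_lt.2 hk]),
      fun n k => if k < i then α k * (L k - x n k) else 0, ⟨?_, ?_, ?_, ?_⟩, ?_⟩
    · intro n; exact inC0_of_ev _ i (fun k hk => by simp [Nat.not_lt.2 hk])
    · intro a b hab k
      by_cases hk : k < i
      · simp only [hk, if_true]
        have := hmono hab k
        have := (hαpos k).le
        nlinarith
      · simp [hk]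
    · intro n k
      by_cases hk : k < i
      · simp only [hk, if_true, Pi.zero_apply]
        exact mul_nonneg (hαpos k).le (by linarith [hxle n k])
      · simp [hk]
    · intro q hq hqle k
      by_cases hk : k < i
      · have htq : Tendsto (fun n => if k < i then α k * (L k - x n k) else 0)
            atTop (nhds 0) := by
          simp only [hk, if_true]
          have := (tendsto_const_nhds (x := L k)).sub (hten k)
          have := (tendsto_const_nhds (x := α k)).mul this
          simpa using this
        exact ge_of_tendsto htq (Filter.Eventually.of_forall fun n => hqle n k)
      · simpa [hk] using hqle 0 k
    · intro n k
      by_cases hk : k < i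
      · simp only [Pi.abs_apply, Pi.sub_apply, hz, hk, if_true]
        rw [abs_sub_comm, abs_of_nonneg (by nlinarith [hxle n k, (hαpos k).le])]
        ring_nf
        nlinarith [hxle n k, (hαpos k).le]
      · simp [hk]
  · -- operator-norm convergence
    refine ⟨α, hα0, ?_⟩
    intro i f _ hf1 k
    by_cases hk : k < i
    · simp [hk, (hαpos i).le]
    · simp only [hk, if_false, zero_sub, abs_neg, abs_mul,
        abs_of_pos (hαpos k)]
      calc α k * |f k| ≤ α k * 1 := by
            exact mul_le_mul_of_nonneg_left (hf1 k) (hαpos k).le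
        _ = α k := mul_one _
        _ ≤ α i := hαanti i k (Nat.not_lt.1 hk)
  · -- S is not σ-Levi
    intro hLevi
    set x : ℕ → ℕ → ℝ := fun n k => if k < n ∧ Even k then 1 else 0 with hx
    obtain ⟨z, ⟨l, hzl⟩, _, p, hp, hple⟩ := hLevi x
      (fun n => ⟨0, inC0_of_ev _ n (fun k hk => by simp [hx]; omega)⟩)
      (by
        intro a b hab k
        by_cases h : k < a ∧ Even k
        · have : k < b ∧ Even k := ⟨lt_of_lt_of_le h.1 hab, h.2⟩
          simp [hx, h, this]
        · simp only [hx, h, if_false]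
          by_cases h2 : k < b ∧ Even k <;> simp [h2])
      (fun n k => by by_cases h : k < n ∧ Even k <;> simp [hx, h])
      ⟨1, fun n k => by by_cases h : k < n ∧ Even k <;> simp [hx, h]⟩
    -- z k = indicator of evens
    have hzval : ∀ k, z k = if Even k then 1 else 0 := by
      intro k
      have hpk := downToZero_pointwise hp k
      have hb : ∀ n, k < n → |α k * (if Even k then 1 else 0) - α k * z k| ≤ p n k := by
        intro n hn
        have := hple n k
        simp only [Pi.abs_apply, Pi.sub_apply, hx] at this
        by_cases he : Even k
        · simpa [he, hn] using this
        · simpa [he] using this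
      have hle : |α k * (if Even k then 1 else 0) - α k * z k| ≤ 0 :=
        ge_of_tendsto hpk (Filter.eventually_atTop.2 ⟨k+1, fun n hn => hb n (by omega)⟩)
      have h0 : α k * (if Even k then 1 else 0) - α k * z k = 0 := by
        have := abs_nonneg (α k * (if Even k then 1 else 0) - α k * z k)
        have habs : |α k * (if Even k then 1 else 0) - α k * z k| = 0 := le_antisymm hle this
        exact abs_eq_zero.1 habs
      have hαne : α k ≠ 0 := (hαpos k).ne'
      have h0' : α k * (if Even k then 1 else 0) = α k * z k := by linarith
      exact (mul_left_cancel₀ hαne h0').symm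
    -- contradiction: z has no limit
    have heven : Tendsto (fun m : ℕ => z (2 * m)) atTop (nhds l) :=
      hzl.comp (tendsto_atTop_atTop.2 fun b => ⟨b, fun a ha => by omega⟩)
    have hodd : Tendsto (fun m : ℕ => z (2 * m + 1)) atTop (nhds l) :=
      hzl.comp (tendsto_atTop_atTop.2 fun b => ⟨b, fun a ha => by omega⟩)
    have h1 : (fun m : ℕ => z (2 * m)) = fun _ => (1:ℝ) := by
      funext m; rw [hzval]; simp [even_two_mul m]
    have h2 : (fun m : ℕ => z (2 * m + 1)) = fun _ => (0:ℝ) := by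
      funext m; rw [hzval]
      have : ¬ Even (2 * m + 1) := by simp [parity_simps]
      simp [this]
    rw [h1] at heven; rw [h2] at hodd
    have hl1 : l = 1 := tendsto_nhds_unique heven tendsto_const_nhds
    have hl0 : l = 0 := tendsto_nhds_unique hodd tendsto_const_nhds
    rw [hl1] at hl0; norm_num at hl0
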